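/- arXiv:1505.01958 — 2 statements merged into one kernel-verified Lean document; each statement's English description precedes it below -/
import Mathlib

section
/- For every L ≥ 1 the following block Toeplitz identity holds: T_L(Φ₂, B₂, C₁, D₁) = G_L + M_L · (I − T_L^f · G_L), where G_L = T_L(Φ₁, B₁, C₁, D₁), M_L = T_L(Φ₁ − K_rC₂, K_r, C₁, 0), and T_L^f = T_L(Φ, Ẽ, C, G). -/
open Matrix

/-- Block lower-triangular Toeplitz matrix `T_L(A,B,C,D)` of the Markov parameters
of the system `(A,B,C,D)`. -/
def TL {α m p : Type*} [Fintype α] [DecidableEq α] (L : ℕ)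
    (A : Matrix α α ℝ) (B : Matrix α m ℝ) (C : Matrix p α ℝ) (D : Matrix p m ℝ) :
    Matrix (Fin L × p) (Fin L × m) ℝ :=
  Matrix.of fun ip jq =>
    if (ip.1 : ℕ) = (jq.1 : ℕ) then D ip.2 jq.2
    else if (jq.1 : ℕ) < (ip.1 : ℕ) then
      (C * A ^ ((ip.1 : ℕ) - (jq.1 : ℕ) - 1) * B) ip.2 jq.2
    else 0

/-- Block of the Toeplitz matrix, as a matrix. -/
def blk {α m p : Type*} [Fintype α] [DecidableEq α]
    (A : Matrix α α ℝ) (B : Matrix α m ℝ) (C : Matrix p α ℝ) (D : Matrix p m ℝ)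
    (i j : ℕ) : Matrix p m ℝ :=
  if i = j then D else if j < i then C * A ^ (i - j - 1) * B else 0

lemma TL_apply {α m p : Type*} [Fintype α] [DecidableEq α] (L : ℕ)
    (A : Matrix α α ℝ) (B : Matrix α m ℝ) (C : Matrix p α ℝ) (D : Matrix p m ℝ)
    (ip : Fin L × p) (jq : Fin L × m) :
    TL L A B C D ip jq = blk A B C D ip.1 jq.1 ip.2 jq.2 := by
  simp only [TL, blk, of_apply]
  split_ifs <;> simp

/-- telescoping sum -/
lemma tele {α : Type*} [Fintype α] [DecidableEq α] (X Y : Matrix α α ℝ) (d : ℕ) :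
    ∑ t ∈ Finset.range d, X ^ (d - 1 - t) * ((Y - X) * Y ^ t) = Y ^ d - X ^ d := by
  have h : ∀ t ∈ Finset.range d,
      X ^ (d - 1 - t) * ((Y - X) * Y ^ t)
        = X ^ (d - (t+1)) * Y ^ (t+1) - X ^ (d - t) * Y ^ t := by
    intro t ht
    have ht' : t < d := Finset.mem_range.mp ht
    have h1 : d - t = (d - 1 - t) + 1 := by omega
    have h2 : d - (t+1) = d - 1 - t := by omega
    rw [h1, h2, sub_mul, mul_sub, pow_succ X, pow_succ' Y]
    simp only [mul_assoc]
  rw [Finset.sum_congr rfl h, Finset.sum_range_sub (f := fun t => X ^ (d - t) * Y ^ t)]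
  simp


lemma blk_sum {α β m p q : Type*} [Fintype α] [DecidableEq α] [Fintype β] [DecidableEq β]
    [Fintype m] (L : ℕ)
    (A : Matrix α α ℝ) (B : Matrix α m ℝ) (C : Matrix p α ℝ) (D : Matrix p m ℝ)
    (A' : Matrix β β ℝ) (B' : Matrix β q ℝ) (C' : Matrix m β ℝ) (D' : Matrix m q ℝ)
    {i j : ℕ} (hi : i < L) (hj : j < L) :
    ∑ k ∈ Finset.range L, blk A B C D i k * blk A' B' C' D' k j =
      if i = j then D * D'
      else if j < i then
        D * (C' * A' ^ (i - j - 1) * B') + C * A ^ (i - j - 1) * B * D'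
          + ∑ t ∈ Finset.range (i - j - 1),
              C * A ^ (i - j - 1 - 1 - t) * B * (C' * A' ^ t * B')
      else 0 := by
  rcases lt_trichotomy i j with h | h | h
  · rw [if_neg (by omega), if_neg (by omega)]
    apply Finset.sum_eq_zero
    intro k _
    by_cases hki : i < k
    · have h1 : blk A B C D i k = 0 := by
        unfold blk; rw [if_neg (by omega), if_neg (by omega)]
      rw [h1, Matrix.zero_mul]
    · have h2 : blk A' B' C' D' k j = 0 := by
        unfold blk; rw [if_neg (by omega), if_neg (by omega)]
      rw [h2, Matrix.mul_zero]
  · subst h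
    rw [if_pos rfl]
    rw [Finset.sum_eq_single_of_mem i (Finset.mem_range.mpr hi)]
    · unfold blk; rw [if_pos rfl, if_pos rfl]
    · intro k _ hk
      rcases lt_or_gt_of_ne hk with hlt | hgt
      · have h2 : blk A' B' C' D' k i = 0 := by
          unfold blk; rw [if_neg (by omega), if_neg (by omega)]
        rw [h2, Matrix.mul_zero]
      · have h1 : blk A B C D i k = 0 := by
          unfold blk; rw [if_neg (by omega), if_neg (by omega)]
        rw [h1, Matrix.zero_mul]
  · rw [if_neg (by omega), if_pos h]
    have hsub : Finset.Icc j i ⊆ Finset.range L := by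
      intro k hk
      rw [Finset.mem_Icc] at hk
      exact Finset.mem_range.mpr (by omega)
    rw [← Finset.sum_subset hsub (fun k hk hk' => ?_)]
    swap
    · rw [Finset.mem_Icc] at hk'
      push_neg at hk'
      by_cases hkj : k < j
      · have h2 : blk A' B' C' D' k j = 0 := by
          unfold blk; rw [if_neg (by omega), if_neg (by omega)]
        rw [h2, Matrix.mul_zero]
      · have h1 : blk A B C D i k = 0 := by
          unfold blk; rw [if_neg (by omega), if_neg (by omega)]
        rw [h1, Matrix.zero_mul]
    rw [← Finset.Ico_add_one_right_eq_Icc, Finset.sum_Ico_eq_sum_range,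
      show i + 1 - j = (i - j - 1) + 1 + 1 by omega,
      Finset.sum_range_succ, Finset.sum_range_succ']
    have h0 : blk A B C D i (j + 0) * blk A' B' C' D' (j + 0) j
        = C * A ^ (i - j - 1) * B * D' := by
      unfold blk
      rw [if_neg (by omega), if_pos (by omega), if_pos (by omega),
        show i - (j + 0) - 1 = i - j - 1 by omega]
    have hlast : blk A B C D i (j + (i - j - 1 + 1)) * blk A' B' C' D' (j + (i - j - 1 + 1)) j
        = D * (C' * A' ^ (i - j - 1) * B') := by
      have hji : j + (i - j - 1 + 1) = i := by omega
      rw [hji]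
      unfold blk
      rw [if_pos rfl, if_neg (by omega), if_pos h]
    have hmid : ∀ t ∈ Finset.range (i - j - 1),
        blk A B C D i (j + (t + 1)) * blk A' B' C' D' (j + (t + 1)) j
          = C * A ^ (i - j - 1 - 1 - t) * B * (C' * A' ^ t * B') := by
      intro t ht
      have ht' : t < i - j - 1 := Finset.mem_range.mp ht
      unfold blk
      rw [if_neg (by omega), if_pos (by omega), if_neg (by omega), if_pos (by omega),
        show i - (j + (t + 1)) - 1 = i - j - 1 - 1 - t by omega,
        show j + (t + 1) - j - 1 = t by omega]
    rw [Finset.sum_congr rfl hmid, h0, hlast]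
    abel

lemma TL_mul_TL {α β m p q : Type*} [Fintype α] [DecidableEq α] [Fintype β] [DecidableEq β]
    [Fintype m] (L : ℕ)
    (A : Matrix α α ℝ) (B : Matrix α m ℝ) (C : Matrix p α ℝ) (D : Matrix p m ℝ)
    (A' : Matrix β β ℝ) (B' : Matrix β q ℝ) (C' : Matrix m β ℝ) (D' : Matrix m q ℝ)
    (ip : Fin L × p) (jq : Fin L × q) :
    (TL L A B C D * TL L A' B' C' D') ip jq =
      (if (ip.1 : ℕ) = (jq.1 : ℕ) then D * D'
       else if (jq.1 : ℕ) < (ip.1 : ℕ) then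
         D * (C' * A' ^ ((ip.1:ℕ) - (jq.1:ℕ) - 1) * B')
           + C * A ^ ((ip.1:ℕ) - (jq.1:ℕ) - 1) * B * D'
           + ∑ t ∈ Finset.range ((ip.1:ℕ) - (jq.1:ℕ) - 1),
               C * A ^ ((ip.1:ℕ) - (jq.1:ℕ) - 1 - 1 - t) * B * (C' * A' ^ t * B')
       else 0) ip.2 jq.2 := by
  obtain ⟨i, p'⟩ := ip
  obtain ⟨j, q'⟩ := jq
  have step1 : (TL L A B C D * TL L A' B' C' D') (i, p') (j, q')
      = (∑ k ∈ Finset.range L, blk A B C D i k * blk A' B' C' D' k j) p' q' := by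
    rw [Matrix.mul_apply, Fintype.sum_prod_type]
    rw [Matrix.sum_apply]
    rw [← Fin.sum_univ_eq_sum_range (fun k => (blk A B C D i k * blk A' B' C' D' k j) p' q')]
    refine Finset.sum_congr rfl fun k _ => ?_
    rw [Matrix.mul_apply]
    refine Finset.sum_congr rfl fun r _ => ?_
    rw [TL_apply, TL_apply]
  rw [step1, blk_sum L A B C D A' B' C' D' i.isLt j.isLt]


/-- **Decomposition of the closed-loop left inverse Toeplitz matrix:**
`T_L(Φ₂,B₂,C₁,D₁) = G_L + M_L (I − T_L^f G_L)` where `G_L = T_L(Φ₁,B₁,C₁,D₁)`,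
`M_L = T_L(Φ₁ − K_r C₂, K_r, C₁, 0)`, `T_L^f = T_L(Φ,Ẽ,C,G)`. -/
theorem stmt10 (n nf ny : ℕ) (hn : 0 < n) (hnf : 0 < nf) (hny : 0 < ny)
    (Φ : Matrix (Fin n) (Fin n) ℝ) (E : Matrix (Fin n) (Fin nf) ℝ)
    (C : Matrix (Fin ny) (Fin n) ℝ) (G : Matrix (Fin ny) (Fin nf) ℝ)
    (Ginv : Matrix (Fin nf) (Fin ny) ℝ) (hG : Ginv * G = 1)
    (Kr : Matrix (Fin n) (Fin ny) ℝ)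
    (Φ₁ : Matrix (Fin n) (Fin n) ℝ) (hΦ₁ : Φ₁ = Φ - E * Ginv * C)
    (B₁ : Matrix (Fin n) (Fin ny) ℝ) (hB₁ : B₁ = E * Ginv)
    (C₁ : Matrix (Fin nf) (Fin n) ℝ) (hC₁ : C₁ = -(Ginv * C))
    (D₁ : Matrix (Fin nf) (Fin ny) ℝ) (hD₁ : D₁ = Ginv)
    (C₂ : Matrix (Fin ny) (Fin n) ℝ) (hC₂ : C₂ = ((1 : Matrix (Fin ny) (Fin ny) ℝ) - G * Ginv) * C)
    (D₂ : Matrix (Fin ny) (Fin ny) ℝ) (hD₂ : D₂ = G * Ginv)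
    (Φ₂ : Matrix (Fin n) (Fin n) ℝ) (hΦ₂ : Φ₂ = Φ₁ - Kr * C₂)
    (B₂ : Matrix (Fin n) (Fin ny) ℝ) (hB₂ : B₂ = B₁ + Kr * ((1 : Matrix (Fin ny) (Fin ny) ℝ) - D₂)) :
    ∀ L : ℕ, 1 ≤ L →
      TL L Φ₂ B₂ C₁ D₁ =
        TL L Φ₁ B₁ C₁ D₁ +
          TL L (Φ₁ - Kr * C₂) Kr C₁ 0 *
            ((1 : Matrix (Fin L × Fin ny) (Fin L × Fin ny) ℝ)
              - TL L Φ E C G * TL L Φ₁ B₁ C₁ D₁) := by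
  intro L hL
  have hEC₁ : E * C₁ = Φ₁ - Φ := by
    rw [hC₁, hΦ₁]
    simp only [Matrix.mul_neg, Matrix.mul_assoc]
    abel
  have hKC₂ : Kr * C₂ = Φ₁ - Φ₂ := by rw [hΦ₂]; abel
  have key1 : TL L Φ E C G * TL L Φ₁ B₁ C₁ D₁ = TL L Φ₁ B₁ C₂ D₂ := by
    ext ip jq
    obtain ⟨i, p⟩ := ip
    obtain ⟨j, q⟩ := jq
    rw [TL_mul_TL, TL_apply]
    simp only [blk]
    rcases lt_trichotomy ((j : ℕ)) ((i : ℕ)) with h | h | h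
    · rw [if_neg (by omega), if_pos h, if_neg (by omega), if_pos h]
      set d := (i : ℕ) - (j : ℕ) - 1 with hd
      have hterm : ∀ t ∈ Finset.range d, C * Φ ^ (d - 1 - t) * E * (C₁ * Φ₁ ^ t * B₁)
          = C * (Φ ^ (d - 1 - t) * ((Φ₁ - Φ) * Φ₁ ^ t)) * B₁ := by
        intro t _
        rw [← hEC₁]
        simp only [Matrix.mul_assoc]
      have hsum : ∑ t ∈ Finset.range d, C * Φ ^ (d - 1 - t) * E * (C₁ * Φ₁ ^ t * B₁)
          = C * (Φ₁ ^ d - Φ ^ d) * B₁ := by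
        rw [Finset.sum_congr rfl hterm, ← Matrix.sum_mul, ← Matrix.mul_sum, tele]
      rw [hsum]
      have hmat : G * (C₁ * Φ₁ ^ d * B₁) + C * Φ ^ d * E * D₁ + C * (Φ₁ ^ d - Φ ^ d) * B₁
          = C₂ * Φ₁ ^ d * B₁ := by
        rw [hC₁, hB₁, hD₁, hC₂]
        simp only [Matrix.mul_neg, Matrix.neg_mul, Matrix.mul_sub, Matrix.sub_mul,
          Matrix.one_mul, Matrix.mul_assoc]
        abel
      rw [hmat]
    · rw [if_pos (by omega), if_pos (by omega), hD₁, hD₂]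
    · rw [if_neg (by omega), if_neg (by omega), if_neg (by omega), if_neg (by omega)]
  have key2 : (1 : Matrix (Fin L × Fin ny) (Fin L × Fin ny) ℝ) - TL L Φ₁ B₁ C₂ D₂
      = TL L Φ₁ B₁ (-C₂) (1 - D₂) := by
    ext ip jq
    obtain ⟨i, p⟩ := ip
    obtain ⟨j, q⟩ := jq
    simp only [Matrix.sub_apply, Matrix.one_apply, TL, Matrix.of_apply, Prod.mk.injEq]
    by_cases h : (i : ℕ) = (j : ℕ)
    · have hij : i = j := Fin.ext h
      subst hij
      simp
    · rw [if_neg (fun hc => h (congrArg Fin.val hc.1)), if_neg h, if_neg h]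
      split_ifs with h2
      · rw [zero_sub]
        simp [Matrix.neg_mul]
      · simp
  have key3 : TL L Φ₂ Kr C₁ 0 * TL L Φ₁ B₁ (-C₂) (1 - D₂)
      = TL L Φ₂ B₂ C₁ D₁ - TL L Φ₁ B₁ C₁ D₁ := by
    ext ip jq
    obtain ⟨i, p⟩ := ip
    obtain ⟨j, q⟩ := jq
    rw [TL_mul_TL, Matrix.sub_apply, TL_apply, TL_apply]
    simp only [blk]
    rcases lt_trichotomy ((j : ℕ)) ((i : ℕ)) with h | h | h
    · rw [if_neg (by omega), if_pos h, if_neg (by omega), if_pos h, if_neg (by omega), if_pos h]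
      set d := (i : ℕ) - (j : ℕ) - 1 with hd
      have hterm : ∀ t ∈ Finset.range d, C₁ * Φ₂ ^ (d - 1 - t) * Kr * (-C₂ * Φ₁ ^ t * B₁)
          = -(C₁ * (Φ₂ ^ (d - 1 - t) * ((Φ₁ - Φ₂) * Φ₁ ^ t)) * B₁) := by
        intro t _
        rw [← hKC₂]
        simp only [Matrix.neg_mul, Matrix.mul_neg, Matrix.mul_assoc]
      have hsum : ∑ t ∈ Finset.range d, C₁ * Φ₂ ^ (d - 1 - t) * Kr * (-C₂ * Φ₁ ^ t * B₁)
          = -(C₁ * (Φ₁ ^ d - Φ₂ ^ d) * B₁) := by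
        rw [Finset.sum_congr rfl hterm, Finset.sum_neg_distrib]
        congr 1
        rw [← Matrix.sum_mul, ← Matrix.mul_sum, tele]
      rw [hsum]
      have hmat : (0 : Matrix (Fin nf) (Fin ny) ℝ) * (-C₂ * Φ₁ ^ d * B₁)
            + C₁ * Φ₂ ^ d * Kr * (1 - D₂) + -(C₁ * (Φ₁ ^ d - Φ₂ ^ d) * B₁)
          = C₁ * Φ₂ ^ d * B₂ - C₁ * Φ₁ ^ d * B₁ := by
        rw [hB₂]
        simp only [Matrix.zero_mul, Matrix.mul_add, Matrix.mul_sub, Matrix.sub_mul,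
          Matrix.mul_assoc]
        abel
      rw [hmat, Matrix.sub_apply]
    · rw [if_pos (by omega), if_pos (by omega), if_pos (by omega)]
      simp
    · rw [if_neg (by omega), if_neg (by omega), if_neg (by omega), if_neg (by omega),
        if_neg (by omega), if_neg (by omega)]
      simp
  rw [← hΦ₂, key1, key2, key3]
  abel
end

section
/- For every L ≥ 1 the following block Toeplitz identity holds: T_L(Φ₁, B₁, C₁, D₁) · T_L(Φ, [B̃ K], −C, [−D I]) = T_L(Φ₁, [B_f K_f], C₁, [D_{f,1} D₁]), where B_f = B̃ − ẼG⁻D, K_f = K + ẼG⁻, and D_{f,1} = −G⁻D (here [X Y] denotes horizontal block concatenation). -/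
open Matrix

/-- Markov parameters of the system `(A,B,C,D)`. -/
def Mk {α m p : Type*} [Fintype α] [DecidableEq α]
    (A : Matrix α α ℝ) (B : Matrix α m ℝ) (C : Matrix p α ℝ) (D : Matrix p m ℝ) :
    ℕ → Matrix p m ℝ :=
  fun t => if t = 0 then D else C * A ^ (t - 1) * B

lemma TL_apply_s13 {α m p : Type*} [Fintype α] [DecidableEq α] (L : ℕ)
    (A : Matrix α α ℝ) (B : Matrix α m ℝ) (C : Matrix p α ℝ) (D : Matrix p m ℝ)
    (i j : Fin L) (x : p) (y : m) :
    TL L A B C D (i, x) (j, y) =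
      if (j : ℕ) ≤ (i : ℕ) then Mk A B C D ((i : ℕ) - (j : ℕ)) x y else 0 := by
  unfold TL Mk
  simp only [Matrix.of_apply]
  split_ifs with h1 h2 h3 h4 h5 h6 h7 <;> first | rfl | omega

lemma fromColumns_add' {p m₁ m₂ : Type*}
    (A A' : Matrix p m₁ ℝ) (B B' : Matrix p m₂ ℝ) :
    Matrix.fromCols A B + Matrix.fromCols A' B'
      = Matrix.fromCols (A + A') (B + B') := by
  ext x (y | y) <;> simp [Matrix.fromCols]

lemma pow_aux {n : ℕ} (Φ Φ₁ : Matrix (Fin n) (Fin n) ℝ) (t : ℕ) :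
    Φ₁ ^ t = Φ ^ t + ∑ u ∈ Finset.range t, Φ₁ ^ (t - 1 - u) * (Φ₁ - Φ) * Φ ^ u := by
  induction t with
  | zero => simp
  | succ t ih =>
    rw [pow_succ' Φ₁, ih, mul_add, Finset.mul_sum, Finset.sum_range_succ]
    have h1 : ∀ u ∈ Finset.range t,
        Φ₁ * (Φ₁ ^ (t - 1 - u) * (Φ₁ - Φ) * Φ ^ u)
          = Φ₁ ^ (t + 1 - 1 - u) * (Φ₁ - Φ) * Φ ^ u := by
      intro u hu
      have hu' : u < t := Finset.mem_range.mp hu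
      have h : t + 1 - 1 - u = (t - 1 - u) + 1 := by omega
      rw [h, pow_succ' Φ₁]
      simp only [mul_assoc]
    rw [Finset.sum_congr rfl h1]
    have h2 : Φ₁ * Φ ^ t = Φ ^ (t + 1) + Φ₁ ^ (t + 1 - 1 - t) * (Φ₁ - Φ) * Φ ^ t := by
      have h : t + 1 - 1 - t = 0 := by omega
      rw [h, pow_succ' Φ, pow_zero, one_mul, sub_mul]
      abel
    rw [h2]
    abel

/-- **The Toeplitz matrix `R_L = G_L · T_L^z`:**
`T_L(Φ₁,B₁,C₁,D₁) · T_L(Φ,[B̃ K],−C,[−D I]) = T_L(Φ₁,[B_f K_f],C₁,[D_{f,1} D₁])`. -/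
theorem stmt13 (n nu nf ny : ℕ) (hn : 0 < n) (hnu : 0 < nu) (hnf : 0 < nf) (hny : 0 < ny)
    (Φ : Matrix (Fin n) (Fin n) ℝ) (Bt : Matrix (Fin n) (Fin nu) ℝ)
    (E : Matrix (Fin n) (Fin nf) ℝ) (K : Matrix (Fin n) (Fin ny) ℝ)
    (C : Matrix (Fin ny) (Fin n) ℝ) (D : Matrix (Fin ny) (Fin nu) ℝ)
    (G : Matrix (Fin ny) (Fin nf) ℝ)
    (Ginv : Matrix (Fin nf) (Fin ny) ℝ) (hG : Ginv * G = 1)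
    (Φ₁ : Matrix (Fin n) (Fin n) ℝ) (hΦ₁ : Φ₁ = Φ - E * Ginv * C)
    (B₁ : Matrix (Fin n) (Fin ny) ℝ) (hB₁ : B₁ = E * Ginv)
    (C₁ : Matrix (Fin nf) (Fin n) ℝ) (hC₁ : C₁ = -(Ginv * C))
    (D₁ : Matrix (Fin nf) (Fin ny) ℝ) (hD₁ : D₁ = Ginv)
    (Bf : Matrix (Fin n) (Fin nu) ℝ) (hBf : Bf = Bt - E * Ginv * D)
    (Kf : Matrix (Fin n) (Fin ny) ℝ) (hKf : Kf = K + E * Ginv)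
    (Df1 : Matrix (Fin nf) (Fin nu) ℝ) (hDf1 : Df1 = -(Ginv * D)) :
    ∀ L : ℕ, 1 ≤ L →
      TL L Φ₁ B₁ C₁ D₁ *
        TL L Φ (Matrix.fromCols Bt K) (-C)
          (Matrix.fromCols (-D) (1 : Matrix (Fin ny) (Fin ny) ℝ)) =
      TL L Φ₁ (Matrix.fromCols Bf Kf) C₁ (Matrix.fromCols Df1 D₁) := by
  -- abbreviations for the two systems on the left
  set B2 : Matrix (Fin n) (Fin nu ⊕ Fin ny) ℝ := Matrix.fromCols Bt K with hB2
  set D2 : Matrix (Fin ny) (Fin nu ⊕ Fin ny) ℝ :=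
    Matrix.fromCols (-D) (1 : Matrix (Fin ny) (Fin ny) ℝ) with hD2
  -- key state-space facts
  have hB₁C : B₁ * (-C) = Φ₁ - Φ := by
    rw [hB₁, hΦ₁]; simp [Matrix.mul_assoc]
  have hD₁C : D₁ * (-C) = C₁ := by
    rw [hD₁, hC₁]; simp
  have hBsum : B2 + B₁ * D2 = Matrix.fromCols Bf Kf := by
    rw [hB2, hD2, Matrix.mul_fromCols, fromColumns_add', hBf, hKf, hB₁]
    rw [Matrix.mul_neg, sub_eq_add_neg, Matrix.mul_one]
  have hDprod : D₁ * D2 = Matrix.fromCols Df1 D₁ := by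
    rw [hD2, Matrix.mul_fromCols, Matrix.mul_neg, Matrix.mul_one, hD₁, hDf1]
  -- the convolution identity for Markov parameters
  have conv : ∀ t : ℕ,
      ∑ s ∈ Finset.range (t + 1),
          Mk Φ₁ B₁ C₁ D₁ (t - s) * Mk Φ B2 (-C) D2 s
        = Mk Φ₁ (Matrix.fromCols Bf Kf) C₁ (Matrix.fromCols Df1 D₁) t := by
    intro t
    cases t with
    | zero => simpa [Mk] using hDprod
    | succ t =>
      rw [Finset.sum_range_succ']
      have hf0 : Mk Φ₁ B₁ C₁ D₁ (t + 1 - 0) * Mk Φ B2 (-C) D2 0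
          = C₁ * Φ₁ ^ t * (B₁ * D2) := by
        simp [Mk, Matrix.mul_assoc]
      rw [hf0]
      have hsplit : ∑ u ∈ Finset.range (t + 1),
          Mk Φ₁ B₁ C₁ D₁ (t + 1 - (u + 1)) * Mk Φ B2 (-C) D2 (u + 1)
          = ∑ u ∈ Finset.range t,
              (C₁ * Φ₁ ^ (t - 1 - u) * (Φ₁ - Φ) * Φ ^ u) * B2
            + C₁ * Φ ^ t * B2 := by
        rw [Finset.sum_range_succ]
        congr 1
        · refine Finset.sum_congr rfl fun u hu => ?_
          have hu' : u < t := Finset.mem_range.mp hu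
          have h1 : t + 1 - (u + 1) = t - u := by omega
          have h2 : ¬ (t - u = 0) := by omega
          have h3 : t - u - 1 = t - 1 - u := by omega
          have e1 : Mk Φ₁ B₁ C₁ D₁ (t + 1 - (u + 1)) = C₁ * Φ₁ ^ (t - 1 - u) * B₁ := by
            rw [h1]; simp [Mk, h2, h3]
          have e2 : Mk Φ B2 (-C) D2 (u + 1) = -C * Φ ^ u * B2 := by
            simp [Mk]
          rw [e1, e2]
          calc C₁ * Φ₁ ^ (t - 1 - u) * B₁ * (-C * Φ ^ u * B2)
              = C₁ * Φ₁ ^ (t - 1 - u) * (B₁ * -C) * (Φ ^ u * B2) := by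
                simp only [Matrix.mul_assoc]
            _ = C₁ * Φ₁ ^ (t - 1 - u) * (Φ₁ - Φ) * Φ ^ u * B2 := by
                rw [hB₁C]; simp only [Matrix.mul_assoc]
        · have e1 : Mk Φ₁ B₁ C₁ D₁ (t + 1 - (t + 1)) = D₁ := by
            simp [Mk]
          have e2 : Mk Φ B2 (-C) D2 (t + 1) = -C * Φ ^ t * B2 := by
            simp [Mk]
          rw [e1, e2]
          calc D₁ * (-C * Φ ^ t * B2) = (D₁ * -C) * (Φ ^ t * B2) := by
                simp only [Matrix.mul_assoc]
            _ = C₁ * Φ ^ t * B2 := by rw [hD₁C]; simp only [Matrix.mul_assoc]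
      rw [hsplit]
      have hpow := pow_aux Φ Φ₁ t
      have hkey : ∑ u ∈ Finset.range t,
            (C₁ * Φ₁ ^ (t - 1 - u) * (Φ₁ - Φ) * Φ ^ u) * B2 + C₁ * Φ ^ t * B2
          = C₁ * Φ₁ ^ t * B2 := by
        have h := congrArg (fun X => C₁ * X * B2) hpow
        simp only [Matrix.mul_add, Matrix.add_mul, Matrix.mul_sum, Matrix.sum_mul,
          Matrix.mul_assoc] at h ⊢
        rw [h, add_comm]
      rw [hkey]
      have hN : Mk Φ₁ (Matrix.fromCols Bf Kf) C₁ (Matrix.fromCols Df1 D₁) (t + 1)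
          = C₁ * Φ₁ ^ t * Matrix.fromCols Bf Kf := by
        simp [Mk]
      rw [hN, ← hBsum, Matrix.mul_add]
  -- assemble the entrywise computation
  intro L hL
  ext ⟨i, x⟩ ⟨j, y⟩
  rw [Matrix.mul_apply, TL_apply_s13]
  rw [Fintype.sum_prod_type]
  have hinner : ∀ k : Fin L,
      ∑ r : Fin ny, TL L Φ₁ B₁ C₁ D₁ (i, x) (k, r) * TL L Φ B2 (-C) D2 (k, r) (j, y)
        = if (k : ℕ) ≤ (i : ℕ) ∧ (j : ℕ) ≤ (k : ℕ) then
            (Mk Φ₁ B₁ C₁ D₁ ((i : ℕ) - (k : ℕ)) * Mk Φ B2 (-C) D2 ((k : ℕ) - (j : ℕ))) x y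
          else 0 := by
    intro k
    by_cases h1 : (k : ℕ) ≤ (i : ℕ) <;> by_cases h2 : (j : ℕ) ≤ (k : ℕ) <;>
      simp [TL_apply_s13, h1, h2, Matrix.mul_apply]
  rw [Finset.sum_congr rfl fun k _ => hinner k]
  -- go from a sum over `Fin L` to a sum over `range L`
  have hrange : ∑ k : Fin L,
      (if (k : ℕ) ≤ (i : ℕ) ∧ (j : ℕ) ≤ (k : ℕ) then
        (Mk Φ₁ B₁ C₁ D₁ ((i : ℕ) - (k : ℕ)) * Mk Φ B2 (-C) D2 ((k : ℕ) - (j : ℕ))) x y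
      else 0)
      = ∑ m ∈ Finset.range L,
        (if m ≤ (i : ℕ) ∧ (j : ℕ) ≤ m then
          (Mk Φ₁ B₁ C₁ D₁ ((i : ℕ) - m) * Mk Φ B2 (-C) D2 (m - (j : ℕ))) x y
        else 0) := by
    rw [← Fin.sum_univ_eq_sum_range]
  rw [hrange]
  by_cases hji : (j : ℕ) ≤ (i : ℕ)
  · rw [if_pos hji]
    have hfilter : ∑ m ∈ Finset.range L,
        (if m ≤ (i : ℕ) ∧ (j : ℕ) ≤ m then
          (Mk Φ₁ B₁ C₁ D₁ ((i : ℕ) - m) * Mk Φ B2 (-C) D2 (m - (j : ℕ))) x y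
        else 0)
        = ∑ m ∈ Finset.Ico (j : ℕ) ((i : ℕ) + 1),
          (Mk Φ₁ B₁ C₁ D₁ ((i : ℕ) - m) * Mk Φ B2 (-C) D2 (m - (j : ℕ))) x y := by
      rw [← Finset.sum_filter]
      apply Finset.sum_congr
      · ext m
        simp only [Finset.mem_filter, Finset.mem_range, Finset.mem_Ico]
        constructor
        · rintro ⟨_, h1, h2⟩; omega
        · intro h
          have hiL : (i : ℕ) < L := i.isLt
          exact ⟨by omega, by omega, by omega⟩
      · intros; rfl
    rw [hfilter, Finset.sum_Ico_eq_sum_range]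
    have harith : (i : ℕ) + 1 - (j : ℕ) = ((i : ℕ) - (j : ℕ)) + 1 := by omega
    rw [harith]
    have hterm : ∀ s ∈ Finset.range (((i : ℕ) - (j : ℕ)) + 1),
        (Mk Φ₁ B₁ C₁ D₁ ((i : ℕ) - ((j : ℕ) + s)) *
          Mk Φ B2 (-C) D2 (((j : ℕ) + s) - (j : ℕ))) x y
        = (Mk Φ₁ B₁ C₁ D₁ (((i : ℕ) - (j : ℕ)) - s) * Mk Φ B2 (-C) D2 s) x y := by
      intro s _
      have h1 : (i : ℕ) - ((j : ℕ) + s) = ((i : ℕ) - (j : ℕ)) - s := by omega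
      have h2 : ((j : ℕ) + s) - (j : ℕ) = s := by omega
      rw [h1, h2]
    rw [Finset.sum_congr rfl hterm, ← Matrix.sum_apply, conv]
  · rw [if_neg hji]
    apply Finset.sum_eq_zero
    intro m _
    rw [if_neg]
    omega
end
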